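/- Let x < L, a > 0 constant, and for 0 < t ≤ t' ≤ T define f(x,t) = (L-x)/(√(2πa) t^{3/2}) exp(-(L-x)²/(2at)). Then for any η ∈ (0, 1/2) there exist constants C, c > 1 such that |f(x,t') - f(x,t)| ≤ C |t' - t|^η ( t'^{-(1+2η)/2} g(ct', L-x) + t^{-(1+2η)/2} g(ct, L-x) ), where g(c,u) = (2πc)^{-1/2} exp(-u²/(2c)). -/

import Mathlib

/-- Gaussian heat kernel `g(c,u) = (2πc)^{-1/2} exp(-u²/(2c))`. -/
noncomputable def gk (c u : ℝ) : ℝ :=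
  (2 * Real.pi * c) ^ (-(1 : ℝ) / 2) * Real.exp (-u ^ 2 / (2 * c))

/-- First-passage (Lévy) density `f(x,t) = (L-x)/(√(2πa) t^{3/2}) exp(-(L-x)²/(2at))`. -/
noncomputable def fden (a L x t : ℝ) : ℝ :=
  (L - x) / (Real.sqrt (2 * Real.pi * a) * t ^ ((3 : ℝ) / 2)) *
    Real.exp (-(L - x) ^ 2 / (2 * a * t))

private lemma pow_le_exp_aux (n : ℕ) (s : ℝ) (hs : 0 ≤ s) :
    s ^ n ≤ (n : ℝ) ^ n * Real.exp s := by
  rcases Nat.eq_zero_or_pos n with hn | hn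
  · subst hn; simpa using Real.one_le_exp hs
  · have hn' : (0:ℝ) < n := by exact_mod_cast hn
    have h1 : s / n ≤ Real.exp (s / n) := by
      linarith [Real.add_one_le_exp (s / n)]
    have h2 : s ^ n = (n:ℝ) ^ n * (s / n) ^ n := by
      rw [← mul_pow]
      field_simp
    rw [h2]
    have h3 : (s / n) ^ n ≤ Real.exp (s / n) ^ n :=
      pow_le_pow_left₀ (div_nonneg hs hn'.le) h1 n
    have h4 : Real.exp (s / n) ^ n = Real.exp s := by
      rw [← Real.exp_nat_mul]
      congr 1
      field_simp
    calc (n:ℝ)^n * (s/n)^n ≤ (n:ℝ)^n * Real.exp (s/n) ^ n :=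
          mul_le_mul_of_nonneg_left h3 (by positivity)
    _ = (n:ℝ)^n * Real.exp s := by rw [h4]

private lemma exp_bound_aux (k b : ℝ) (hk : 0 ≤ k) (hb : 0 < b) :
    ∃ K : ℝ, 0 < K ∧ ∀ t : ℝ, 0 < t → Real.exp (-(b / t)) ≤ K * t ^ k := by
  set n := ⌈k⌉₊ with hn_def
  refine ⟨(1 + (n:ℝ)^n) * b ^ (-k), by positivity, fun t ht => ?_⟩
  have hs : 0 < b / t := div_pos hb ht
  have hcase : (b/t) ^ k ≤ 1 + (b/t) ^ n := by
    rcases le_total (b/t) 1 with h | h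
    · have h0 := Real.rpow_le_one hs.le h hk
      nlinarith [pow_nonneg hs.le n]
    · have h0 : (b/t) ^ k ≤ (b/t) ^ (n:ℝ) :=
        Real.rpow_le_rpow_of_exponent_le h (Nat.le_ceil k)
      rw [Real.rpow_natCast] at h0
      linarith
  have hpn : (b/t) ^ n ≤ (n:ℝ)^n * Real.exp (b/t) := pow_le_exp_aux n _ hs.le
  have hexp1 : (1:ℝ) ≤ Real.exp (b/t) := Real.one_le_exp hs.le
  have h1 : (b/t) ^ k ≤ (1 + (n:ℝ)^n) * Real.exp (b/t) := by nlinarith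
  have h2 : Real.exp (-(b/t)) * (b/t) ^ k ≤ 1 + (n:ℝ)^n := by
    rw [Real.exp_neg]
    rw [mul_comm, ← div_eq_mul_inv]
    exact (div_le_iff₀ (Real.exp_pos _)).mpr h1
  have hbt : (b/t) ^ k = b ^ k * t ^ (-k) := by
    rw [div_eq_mul_inv, Real.mul_rpow hb.le (inv_nonneg.mpr ht.le),
      Real.inv_rpow ht.le, ← Real.rpow_neg ht.le]
  have hbb : b ^ k * b ^ (-k) = 1 := by
    rw [← Real.rpow_add hb]; simp
  have htt : t ^ (-k) * t ^ k = 1 := by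
    rw [← Real.rpow_add ht]; simp
  have h3 := mul_le_mul_of_nonneg_right h2 (show (0:ℝ) ≤ b^(-k) * t^k by positivity)
  have hkey : Real.exp (-(b/t)) * (b/t)^k * (b^(-k)*t^k) = Real.exp (-(b/t)) := by
    rw [hbt]
    have e : Real.exp (-(b/t)) * (b^k*t^(-k)) * (b^(-k)*t^k)
        = Real.exp (-(b/t)) * ((b^k*b^(-k))*(t^(-k)*t^k)) := by ring
    rw [e, hbb, htt]; ring
  rw [hkey] at h3
  calc Real.exp (-(b/t)) ≤ (1 + (n:ℝ)^n) * (b^(-k)*t^k) := h3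
  _ = (1 + (n:ℝ)^n) * b^(-k) * t^k := by ring

set_option maxHeartbeats 1000000 in
/-- Hölder regularity in time of the first-passage density: for `η ∈ (0,1/2)`
there are `C, c > 1` such that for `0 < t ≤ t' ≤ T`,
`|f(x,t') - f(x,t)| ≤ C |t'-t|^η (t'^{-(1+2η)/2} g(ct',L-x) + t^{-(1+2η)/2} g(ct,L-x))`. -/
theorem first_passage_density_time_holder (a L x T η : ℝ)
    (ha : 0 < a) (hx : x < L) (hT : 0 < T) (hη : η ∈ Set.Ioo (0 : ℝ) (1 / 2)) :
    ∃ C c : ℝ, 1 < C ∧ 1 < c ∧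
      ∀ t t' : ℝ, 0 < t → t ≤ t' → t' ≤ T →
        |fden a L x t' - fden a L x t|
          ≤ C * |t' - t| ^ η *
            (t' ^ (-(1 + 2 * η) / 2) * gk (c * t') (L - x)
              + t ^ (-(1 + 2 * η) / 2) * gk (c * t) (L - x)) := by
  obtain ⟨hη0, hη2⟩ := hη
  have hπ : 0 < Real.pi := Real.pi_pos
  set u := L - x with hu_def
  have hu : 0 < u := sub_pos.mpr hx
  set c := max (2*a) 2 with hc_def
  have hc2 : (2:ℝ) ≤ c := le_max_right _ _
  have hca : 2*a ≤ c := le_max_left _ _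
  have hc1 : (1:ℝ) < c := by linarith
  have hc0 : (0:ℝ) < c := by linarith
  have hπc : (0:ℝ) < 2*Real.pi*c := by positivity
  set A := u / Real.sqrt (2*Real.pi*a) with hA_def
  have hA : 0 < A := div_pos hu (Real.sqrt_pos.mpr (by positivity))
  set b0 := u^2/(2*a) with hb0_def
  have hb0 : 0 < b0 := by positivity
  set β := u^2/(2*c) with hβ_def
  have hβ : 0 < β := by positivity
  have hδ1 : 0 < b0 - β := by
    have : u^2/(2*c) < u^2/(2*a) := by
      apply div_lt_div_of_pos_left (by positivity) (by positivity) (by linarith)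
    simp only [hb0_def, hβ_def]; linarith
  have hδ2 : 0 < 2*b0/3 - β := by
    have h1 : u^2/(2*c) < u^2/(3*a) := by
      apply div_lt_div_of_pos_left (by positivity) (by positivity) (by linarith)
    have h2 : 2*b0/3 = u^2/(3*a) := by rw [hb0_def]; field_simp
    rw [h2]; simp only [hβ_def]; linarith
  obtain ⟨K1, hK1pos, hK1⟩ := exp_bound_aux (1/2) (b0 - β) (by norm_num) hδ1
  obtain ⟨K2, hK2pos, hK2⟩ := exp_bound_aux (1/2) (2*b0/3 - β) (by norm_num) hδ2
  obtain ⟨K3, hK3pos, hK3⟩ := exp_bound_aux (3/2) (2*b0/3 - β) (by norm_num) hδ2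
  clear_value u c A b0 β
  -- rewriting lemmas
  have hf : ∀ s : ℝ, 0 < s → fden a L x s = A * s ^ (-((3:ℝ)/2)) * Real.exp (-(b0 / s)) := by
    intro s hs
    have h32 : (0:ℝ) < s ^ ((3:ℝ)/2) := Real.rpow_pos_of_pos hs _
    unfold fden
    rw [← hu_def]
    rw [show -u^2/(2*a*s) = -(b0/s) by rw [hb0_def]; field_simp]
    rw [hA_def, Real.rpow_neg hs.le]
    field_simp
  have hgk : ∀ s : ℝ, 0 < s → gk (c*s) u
      = (2*Real.pi*c) ^ (-(1:ℝ)/2) * s ^ (-(1:ℝ)/2) * Real.exp (-(β / s)) := by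
    intro s hs
    unfold gk
    rw [show 2*Real.pi*(c*s) = (2*Real.pi*c)*s by ring]
    rw [Real.mul_rpow hπc.le hs.le]
    rw [show -u^2/(2*(c*s)) = -(β/s) by rw [hβ_def]; field_simp]
  have hgk_nonneg : ∀ s : ℝ, 0 < s → 0 ≤ gk (c*s) u := by
    intro s hs; rw [hgk s hs]; positivity
  have hfden_nonneg : ∀ s : ℝ, 0 < s → 0 ≤ fden a L x s := by
    intro s hs; rw [hf s hs]
    have := Real.rpow_nonneg hs.le (-((3:ℝ)/2))
    positivity
  set C1 := A * (2*Real.pi*c) ^ ((1:ℝ)/2) * K1 with hC1_def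
  have hC1 : 0 < C1 := by
    have := Real.rpow_pos_of_pos hπc ((1:ℝ)/2)
    positivity
  set C2 := A * ((3/2)*K2 + b0*K3) * (2*Real.pi*c) ^ ((1:ℝ)/2) with hC2_def
  have hC2 : 0 < C2 := by
    have h1 := Real.rpow_pos_of_pos hπc ((1:ℝ)/2)
    have h2 : (0:ℝ) < (3/2)*K2 + b0*K3 := by positivity
    positivity
  clear_value C1 C2
  have h3η : (0:ℝ) < (3:ℝ)^η := Real.rpow_pos_of_pos (by norm_num) η
  refine ⟨1 + (3:ℝ)^η * C1 + C2, c, by nlinarith, hc1, ?_⟩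
  intro t t' ht htt' ht'T
  have ht' : 0 < t' := lt_of_lt_of_le ht htt'
  -- bound1 : pointwise bound on fden
  have bound1 : ∀ s : ℝ, 0 < s →
      fden a L x s ≤ C1 * (s ^ (-(1:ℝ)/2) * gk (c*s) u) := by
    intro s hs
    rw [hf s hs, hgk s hs]
    have hsplit : Real.exp (-(b0/s)) = Real.exp (-(β/s)) * Real.exp (-((b0-β)/s)) := by
      rw [← Real.exp_add]; congr 1; field_simp; ring
    rw [hsplit]
    have hK := hK1 s hs
    have e1 : s ^ (-((3:ℝ)/2)) * s ^ ((1:ℝ)/2) = s ^ (-(1:ℝ)) := by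
      rw [← Real.rpow_add hs]; norm_num
    have e2 : s ^ (-(1:ℝ)/2) * s ^ (-(1:ℝ)/2) = s ^ (-(1:ℝ)) := by
      rw [← Real.rpow_add hs]; norm_num
    have e3 : (2*Real.pi*c) ^ ((1:ℝ)/2) * (2*Real.pi*c) ^ (-(1:ℝ)/2) = 1 := by
      rw [← Real.rpow_add hπc]; norm_num
    have hR : C1 * (s ^ (-(1:ℝ)/2) * ((2*Real.pi*c) ^ (-(1:ℝ)/2) * s ^ (-(1:ℝ)/2)
          * Real.exp (-(β/s))))
        = A * K1 * s ^ (-(1:ℝ)) * Real.exp (-(β/s)) := by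
      calc C1 * (s ^ (-(1:ℝ)/2) * ((2*Real.pi*c) ^ (-(1:ℝ)/2) * s ^ (-(1:ℝ)/2)
            * Real.exp (-(β/s))))
          = A * K1 * ((2*Real.pi*c) ^ ((1:ℝ)/2) * (2*Real.pi*c) ^ (-(1:ℝ)/2))
            * ((s ^ (-(1:ℝ)/2) * s ^ (-(1:ℝ)/2)) * Real.exp (-(β/s))) := by
            rw [hC1_def]; ring
      _ = A * K1 * s ^ (-(1:ℝ)) * Real.exp (-(β/s)) := by rw [e2, e3]; ring
    rw [hR]
    calc A * s ^ (-((3:ℝ)/2)) * (Real.exp (-(β/s)) * Real.exp (-((b0-β)/s)))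
        ≤ A * s ^ (-((3:ℝ)/2)) * (Real.exp (-(β/s)) * (K1 * s ^ ((1:ℝ)/2))) := by
          have h1 := mul_le_mul_of_nonneg_left hK (Real.exp_pos (-(β/s))).le
          exact mul_le_mul_of_nonneg_left h1
            (mul_nonneg hA.le (Real.rpow_nonneg hs.le _))
    _ = A * K1 * (s ^ (-((3:ℝ)/2)) * s ^ ((1:ℝ)/2)) * Real.exp (-(β/s)) := by ring
    _ = A * K1 * s ^ (-(1:ℝ)) * Real.exp (-(β/s)) := by rw [e1]
  rcases le_or_gt (t/2) (t' - t) with hgap | hgap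
  · -- Case A : big time gap
    have habs0 : |t' - t| = t' - t := abs_of_nonneg (by linarith)
    rw [habs0]
    have key : ∀ s : ℝ, 0 < s → s/3 ≤ t' - t →
        fden a L x s ≤ (3:ℝ)^η * C1 * ((t'-t)^η * (s ^ (-(1 + 2*η)/2) * gk (c*s) u)) := by
      intro s hs hs3
      have hb1 := bound1 s hs
      have hsplit : s ^ (-(1:ℝ)/2) = s ^ η * s ^ (-(1 + 2*η)/2) := by
        rw [← Real.rpow_add hs]; congr 1; ring
      have hsη : s ^ η ≤ (3:ℝ)^η * (t'-t)^η := by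
        have h1 : s ^ η = (3:ℝ)^η * (s/3)^η := by
          rw [← Real.mul_rpow (by norm_num) (by positivity)]
          congr 1; ring
        rw [h1]
        exact mul_le_mul_of_nonneg_left
          (Real.rpow_le_rpow (by positivity) hs3 hη0.le) h3η.le
      calc fden a L x s ≤ C1 * (s ^ (-(1:ℝ)/2) * gk (c*s) u) := hb1
      _ = C1 * (s ^ η * (s ^ (-(1 + 2*η)/2) * gk (c*s) u)) := by rw [hsplit]; ring
      _ ≤ C1 * (((3:ℝ)^η * (t'-t)^η) * (s ^ (-(1 + 2*η)/2) * gk (c*s) u)) := by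
          apply mul_le_mul_of_nonneg_left _ hC1.le
          exact mul_le_mul_of_nonneg_right hsη
            (mul_nonneg (Real.rpow_nonneg hs.le _) (hgk_nonneg s hs))
      _ = (3:ℝ)^η * C1 * ((t'-t)^η * (s ^ (-(1 + 2*η)/2) * gk (c*s) u)) := by ring
    have h1' := key t' ht' (by linarith)
    have h2' := key t ht (by linarith)
    have habs : |fden a L x t' - fden a L x t| ≤ fden a L x t' + fden a L x t := by
      calc |fden a L x t' - fden a L x t| ≤ |fden a L x t'| + |fden a L x t| := abs_sub _ _
      _ = fden a L x t' + fden a L x t := by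
        rw [abs_of_nonneg (hfden_nonneg t' ht'), abs_of_nonneg (hfden_nonneg t ht)]
    have hPt' : 0 ≤ t' ^ (-(1 + 2*η)/2) * gk (c*t') u :=
      mul_nonneg (Real.rpow_nonneg ht'.le _) (hgk_nonneg t' ht')
    have hPt : 0 ≤ t ^ (-(1 + 2*η)/2) * gk (c*t) u :=
      mul_nonneg (Real.rpow_nonneg ht.le _) (hgk_nonneg t ht)
    have hEnn : 0 ≤ (t'-t)^η * (t' ^ (-(1 + 2*η)/2) * gk (c*t') u
        + t ^ (-(1 + 2*η)/2) * gk (c*t) u) :=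
      mul_nonneg (Real.rpow_nonneg (by linarith) η) (add_nonneg hPt' hPt)
    have hsum : (3:ℝ)^η * C1 * ((t'-t)^η * (t' ^ (-(1 + 2*η)/2) * gk (c*t') u))
        + (3:ℝ)^η * C1 * ((t'-t)^η * (t ^ (-(1 + 2*η)/2) * gk (c*t) u))
        = (3:ℝ)^η * C1 * ((t'-t)^η * (t' ^ (-(1 + 2*η)/2) * gk (c*t') u
          + t ^ (-(1 + 2*η)/2) * gk (c*t) u)) := by ring
    have hCmono : (3:ℝ)^η * C1 * ((t'-t)^η * (t' ^ (-(1 + 2*η)/2) * gk (c*t') u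
          + t ^ (-(1 + 2*η)/2) * gk (c*t) u))
        ≤ (1 + (3:ℝ)^η * C1 + C2) * ((t'-t)^η * (t' ^ (-(1 + 2*η)/2) * gk (c*t') u
          + t ^ (-(1 + 2*η)/2) * gk (c*t) u)) :=
      mul_le_mul_of_nonneg_right (by linarith) hEnn
    calc |fden a L x t' - fden a L x t| ≤ fden a L x t' + fden a L x t := habs
    _ ≤ (3:ℝ)^η * C1 * ((t'-t)^η * (t' ^ (-(1 + 2*η)/2) * gk (c*t') u
          + t ^ (-(1 + 2*η)/2) * gk (c*t) u)) := by linarith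
    _ ≤ (1 + (3:ℝ)^η * C1 + C2) * ((t'-t)^η * (t' ^ (-(1 + 2*η)/2) * gk (c*t') u
          + t ^ (-(1 + 2*η)/2) * gk (c*t) u)) := hCmono
    _ = (1 + (3:ℝ)^η * C1 + C2) * (t'-t)^η * (t' ^ (-(1 + 2*η)/2) * gk (c*t') u
          + t ^ (-(1 + 2*η)/2) * gk (c*t) u) := by ring
  · rcases eq_or_lt_of_le htt' with heq | hlt
    · rw [heq]
      simp [Real.zero_rpow hη0.ne']
    · -- Case B : small time gap, mean value theorem
      have hgap' : 0 < t' - t := by linarith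
      have habs0 : |t' - t| = t' - t := abs_of_nonneg (by linarith)
      rw [habs0]
      set M := A * ((3:ℝ)/2 * (t ^ (-((3:ℝ)/2) - 1)) * Real.exp (-(2*b0/3/t))
        + t ^ (-((3:ℝ)/2)) * (Real.exp (-(2*b0/3/t)) * (b0 * t ^ (-(2:ℝ))))) with hM_def
      clear_value M
      have hMnn : 0 ≤ M := by
        rw [hM_def]
        apply mul_nonneg hA.le
        apply add_nonneg
        · exact mul_nonneg (mul_nonneg (by norm_num) (Real.rpow_nonneg ht.le _))
            (Real.exp_pos _).le
        · exact mul_nonneg (Real.rpow_nonneg ht.le _)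
            (mul_nonneg (Real.exp_pos _).le (mul_nonneg hb0.le (Real.rpow_nonneg ht.le _)))
      have hmvt : ‖(fun y : ℝ => A * (y ^ (-((3:ℝ)/2)) * Real.exp (-(b0 / y)))) t'
          - (fun y : ℝ => A * (y ^ (-((3:ℝ)/2)) * Real.exp (-(b0 / y)))) t‖ ≤ M * ‖t' - t‖ := by
        apply Convex.norm_image_sub_le_of_norm_hasDerivWithin_le
          (f' := fun s : ℝ => A * ((-((3:ℝ)/2)) * s ^ (-((3:ℝ)/2) - 1) * Real.exp (-(b0/s))
            + s ^ (-((3:ℝ)/2)) * (Real.exp (-(b0/s)) * (b0 * s ^ (-(2:ℝ))))))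
          ?_ ?_ (convex_Icc t t') (Set.left_mem_Icc.mpr htt') (Set.right_mem_Icc.mpr htt')
        · -- derivative
          intro s hsmem
          have hs : 0 < s := lt_of_lt_of_le ht hsmem.1
          have h1 : HasDerivAt (fun y : ℝ => y ^ (-((3:ℝ)/2)))
              ((-((3:ℝ)/2)) * s ^ (-((3:ℝ)/2) - 1)) s :=
            Real.hasDerivAt_rpow_const (Or.inl hs.ne')
          have h2 : HasDerivAt (fun y : ℝ => -(b0 / y)) (b0 * s ^ (-(2:ℝ))) s := by
            have h : HasDerivAt (fun y : ℝ => -(b0 / y)) (-(b0 * -(s^2)⁻¹)) s :=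
              ((hasDerivAt_inv hs.ne').const_mul b0).neg
            have h2a : s ^ (-(2:ℝ)) = (s^2)⁻¹ := by
              rw [Real.rpow_neg hs.le, show (2:ℝ) = ((2:ℕ):ℝ) by norm_num,
                Real.rpow_natCast]
            convert h using 1
            rw [h2a]; ring

          have h3 := h2.exp
          have h4 := (h1.mul h3).const_mul A
          exact h4.hasDerivWithinAt
        · -- bound on the derivative
          intro s hsmem
          have hts := hsmem.1
          have hs : 0 < s := lt_of_lt_of_le ht hts
          have hsle : s ≤ 3*t/2 := by
            have := hsmem.2; linarith
          have hexp : Real.exp (-(b0/s)) ≤ Real.exp (-(2*b0/3/t)) := by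
            apply Real.exp_le_exp.mpr
            have h0 : 2*b0/3/t ≤ b0/s := by
              rw [div_le_div_iff₀ ht hs]
              calc 2*b0/3*s ≤ 2*b0/3*(3*t/2) :=
                    mul_le_mul_of_nonneg_left hsle (by linarith)
              _ = b0*t := by ring
            linarith
          have hrp : ∀ p : ℝ, p ≤ 0 → s ^ p ≤ t ^ p := fun p hp =>
            Real.rpow_le_rpow_of_nonpos ht hts hp
          rw [Real.norm_eq_abs]
          have hd1 : |(-((3:ℝ)/2)) * s ^ (-((3:ℝ)/2) - 1) * Real.exp (-(b0/s))|
              = (3:ℝ)/2 * s ^ (-((3:ℝ)/2) - 1) * Real.exp (-(b0/s)) := by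
            rw [abs_mul, abs_mul, abs_of_nonneg (Real.rpow_nonneg hs.le _),
              abs_of_pos (Real.exp_pos _)]
            norm_num
          have hd2 : |s ^ (-((3:ℝ)/2)) * (Real.exp (-(b0/s)) * (b0 * s ^ (-(2:ℝ))))|
              = s ^ (-((3:ℝ)/2)) * (Real.exp (-(b0/s)) * (b0 * s ^ (-(2:ℝ)))) := by
            apply abs_of_nonneg
            exact mul_nonneg (Real.rpow_nonneg hs.le _)
              (mul_nonneg (Real.exp_pos _).le (mul_nonneg hb0.le (Real.rpow_nonneg hs.le _)))
          have hX : (3:ℝ)/2 * s ^ (-((3:ℝ)/2) - 1) * Real.exp (-(b0/s))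
              ≤ (3:ℝ)/2 * (t ^ (-((3:ℝ)/2) - 1)) * Real.exp (-(2*b0/3/t)) := by
            apply mul_le_mul (mul_le_mul_of_nonneg_left (hrp _ (by norm_num)) (by norm_num))
              hexp (Real.exp_pos _).le
            exact mul_nonneg (by norm_num) (Real.rpow_nonneg ht.le _)
          have hY : s ^ (-((3:ℝ)/2)) * (Real.exp (-(b0/s)) * (b0 * s ^ (-(2:ℝ))))
              ≤ t ^ (-((3:ℝ)/2)) * (Real.exp (-(2*b0/3/t)) * (b0 * t ^ (-(2:ℝ)))) := by
            apply mul_le_mul (hrp _ (by norm_num))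
            · apply mul_le_mul hexp (mul_le_mul_of_nonneg_left (hrp _ (by norm_num)) hb0.le)
                (mul_nonneg hb0.le (Real.rpow_nonneg hs.le _)) (Real.exp_pos _).le
            · exact mul_nonneg (Real.exp_pos _).le
                (mul_nonneg hb0.le (Real.rpow_nonneg hs.le _))
            · exact Real.rpow_nonneg ht.le _
          calc |A * ((-((3:ℝ)/2)) * s ^ (-((3:ℝ)/2) - 1) * Real.exp (-(b0/s))
                + s ^ (-((3:ℝ)/2)) * (Real.exp (-(b0/s)) * (b0 * s ^ (-(2:ℝ)))))|
              = A * |(-((3:ℝ)/2)) * s ^ (-((3:ℝ)/2) - 1) * Real.exp (-(b0/s))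
                + s ^ (-((3:ℝ)/2)) * (Real.exp (-(b0/s)) * (b0 * s ^ (-(2:ℝ))))| := by
                rw [abs_mul, abs_of_pos hA]
          _ ≤ A * (|(-((3:ℝ)/2)) * s ^ (-((3:ℝ)/2) - 1) * Real.exp (-(b0/s))|
                + |s ^ (-((3:ℝ)/2)) * (Real.exp (-(b0/s)) * (b0 * s ^ (-(2:ℝ))))|) :=
                mul_le_mul_of_nonneg_left (abs_add_le _ _) hA.le
          _ = A * ((3:ℝ)/2 * s ^ (-((3:ℝ)/2) - 1) * Real.exp (-(b0/s))
                + s ^ (-((3:ℝ)/2)) * (Real.exp (-(b0/s)) * (b0 * s ^ (-(2:ℝ))))) := by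
                rw [hd1, hd2]
          _ ≤ M := by
                rw [hM_def]
                exact mul_le_mul_of_nonneg_left (add_le_add hX hY) hA.le
      have hstep : |fden a L x t' - fden a L x t| ≤ M * (t' - t) := by
        simp only [Real.norm_eq_abs] at hmvt
        rw [hf t' ht', hf t ht]
        rw [abs_of_nonneg (by linarith : (0:ℝ) ≤ t' - t)] at hmvt
        calc |A * t' ^ (-((3:ℝ)/2)) * Real.exp (-(b0/t')) - A * t ^ (-((3:ℝ)/2)) * Real.exp (-(b0/t))|
            = |A * (t' ^ (-((3:ℝ)/2)) * Real.exp (-(b0/t'))) - A * (t ^ (-((3:ℝ)/2)) * Real.exp (-(b0/t)))| := by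
              ring_nf
        _ ≤ M * (t' - t) := hmvt
      have hPt' : 0 ≤ t' ^ (-(1 + 2*η)/2) * gk (c*t') u :=
        mul_nonneg (Real.rpow_nonneg ht'.le _) (hgk_nonneg t' ht')
      have hPt : 0 ≤ t ^ (-(1 + 2*η)/2) * gk (c*t) u :=
        mul_nonneg (Real.rpow_nonneg ht.le _) (hgk_nonneg t ht)
      have hMt : M * t ^ ((1:ℝ)-η) ≤ C2 * (t ^ (-(1 + 2*η)/2) * gk (c*t) u) := by
        rw [hgk t ht, hM_def]
        have hEsplit : Real.exp (-(2*b0/3/t))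
            = Real.exp (-(β/t)) * Real.exp (-((2*b0/3 - β)/t)) := by
          rw [← Real.exp_add]; congr 1; field_simp; ring
        rw [hEsplit]
        have hK2' := hK2 t ht
        have hK3' := hK3 t ht
        have e4 : t^(-((3:ℝ)/2) - 1) * t^((1:ℝ)/2) * t^((1:ℝ)-η) = t^(-(1:ℝ)-η) := by
          rw [← Real.rpow_add ht, ← Real.rpow_add ht]; congr 1; ring
        have e5 : t^(-((3:ℝ)/2)) * t^(-(2:ℝ)) * t^((3:ℝ)/2) * t^((1:ℝ)-η) = t^(-(1:ℝ)-η) := by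
          rw [← Real.rpow_add ht, ← Real.rpow_add ht, ← Real.rpow_add ht]; congr 1; ring
        have e6 : t^(-(1 + 2*η)/2) * t^(-(1:ℝ)/2) = t^(-(1:ℝ)-η) := by
          rw [← Real.rpow_add ht]; congr 1; ring
        have e3 : (2*Real.pi*c) ^ ((1:ℝ)/2) * (2*Real.pi*c) ^ (-(1:ℝ)/2) = 1 := by
          rw [← Real.rpow_add hπc]; norm_num
        calc A * ((3:ℝ)/2 * (t ^ (-((3:ℝ)/2) - 1)) * (Real.exp (-(β/t)) * Real.exp (-((2*b0/3 - β)/t)))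
              + t ^ (-((3:ℝ)/2)) * ((Real.exp (-(β/t)) * Real.exp (-((2*b0/3 - β)/t))) * (b0 * t ^ (-(2:ℝ))))) * t^((1:ℝ)-η)
            ≤ A * ((3:ℝ)/2 * (t ^ (-((3:ℝ)/2) - 1)) * (Real.exp (-(β/t)) * (K2 * t^((1:ℝ)/2)))
              + t ^ (-((3:ℝ)/2)) * ((Real.exp (-(β/t)) * (K3 * t^((3:ℝ)/2))) * (b0 * t ^ (-(2:ℝ))))) * t^((1:ℝ)-η) := by
              apply mul_le_mul_of_nonneg_right _ (Real.rpow_nonneg ht.le _)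
              apply mul_le_mul_of_nonneg_left _ hA.le
              apply add_le_add
              · apply mul_le_mul_of_nonneg_left
                  (mul_le_mul_of_nonneg_left hK2' (Real.exp_pos _).le)
                  (mul_nonneg (by norm_num) (Real.rpow_nonneg ht.le _))
              · apply mul_le_mul_of_nonneg_left _ (Real.rpow_nonneg ht.le _)
                apply mul_le_mul_of_nonneg_right
                  (mul_le_mul_of_nonneg_left hK3' (Real.exp_pos _).le)
                  (mul_nonneg hb0.le (Real.rpow_nonneg ht.le _))
        _ = ((3:ℝ)/2*K2*A) * (t^(-((3:ℝ)/2) - 1) * t^((1:ℝ)/2) * t^((1:ℝ)-η)) * Real.exp (-(β/t))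
              + (b0*K3*A) * (t^(-((3:ℝ)/2)) * t^(-(2:ℝ)) * t^((3:ℝ)/2) * t^((1:ℝ)-η)) * Real.exp (-(β/t)) := by
              ring
        _ = ((3:ℝ)/2*K2*A + b0*K3*A) * t^(-(1:ℝ)-η) * Real.exp (-(β/t)) := by
              rw [e4, e5]; ring
        _ = C2 * (t^(-(1 + 2*η)/2) * ((2*Real.pi*c) ^ (-(1:ℝ)/2) * t ^ (-(1:ℝ)/2) * Real.exp (-(β/t)))) := by
              have hR : C2 * (t^(-(1 + 2*η)/2) * ((2*Real.pi*c) ^ (-(1:ℝ)/2) * t ^ (-(1:ℝ)/2) * Real.exp (-(β/t))))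
                  = (A*((3:ℝ)/2*K2 + b0*K3)) * ((2*Real.pi*c) ^ ((1:ℝ)/2) * (2*Real.pi*c) ^ (-(1:ℝ)/2))
                    * ((t^(-(1 + 2*η)/2) * t^(-(1:ℝ)/2)) * Real.exp (-(β/t))) := by
                rw [hC2_def]; ring
              rw [hR, e3, e6]; ring
      have hpos1 : (0:ℝ) ≤ 1 + (3:ℝ)^η * C1 := by
        have := mul_pos h3η hC1; linarith
      calc |fden a L x t' - fden a L x t| ≤ M * (t' - t) := hstep
      _ = (t'-t)^η * (t'-t)^((1:ℝ)-η) * M := by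
            have hη1' : (t'-t)^η * (t'-t)^((1:ℝ)-η) = t'-t := by
              rw [← Real.rpow_add hgap', show η + ((1:ℝ)-η) = 1 by ring, Real.rpow_one]
            linear_combination M * hη1'.symm
      _ ≤ (t'-t)^η * (M * t^((1:ℝ)-η)) := by
            have h1 : M * (t'-t)^((1:ℝ)-η) ≤ M * t^((1:ℝ)-η) :=
              mul_le_mul_of_nonneg_left
                (Real.rpow_le_rpow (by linarith) (by linarith) (by linarith)) hMnn
            calc (t'-t)^η * (t'-t)^((1:ℝ)-η) * M
                = (t'-t)^η * (M * (t'-t)^((1:ℝ)-η)) := by ring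
            _ ≤ (t'-t)^η * (M * t^((1:ℝ)-η)) :=
              mul_le_mul_of_nonneg_left h1 (Real.rpow_nonneg hgap'.le η)
      _ ≤ (t'-t)^η * (C2 * (t ^ (-(1 + 2*η)/2) * gk (c*t) u)) :=
            mul_le_mul_of_nonneg_left hMt (Real.rpow_nonneg hgap'.le η)
      _ ≤ (1 + (3:ℝ)^η * C1 + C2) * (t'-t)^η * (t' ^ (-(1 + 2*η)/2) * gk (c*t') u
            + t ^ (-(1 + 2*η)/2) * gk (c*t) u) := by
            have h2 : C2 * (t ^ (-(1 + 2*η)/2) * gk (c*t) u)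
                ≤ (1 + (3:ℝ)^η * C1 + C2) * (t' ^ (-(1 + 2*η)/2) * gk (c*t') u
                  + t ^ (-(1 + 2*η)/2) * gk (c*t) u) := by
              nlinarith [mul_nonneg hC2.le hPt', mul_nonneg hpos1 (add_nonneg hPt' hPt)]
            calc (t'-t)^η * (C2 * (t ^ (-(1 + 2*η)/2) * gk (c*t) u))
                ≤ (t'-t)^η * ((1 + (3:ℝ)^η * C1 + C2) * (t' ^ (-(1 + 2*η)/2) * gk (c*t') u
                  + t ^ (-(1 + 2*η)/2) * gk (c*t) u)) := by
                  apply mul_le_mul_of_nonneg_left _ (Real.rpow_nonneg hgap'.le η)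
                  calc C2 * (t ^ (-(1 + 2*η)/2) * gk (c*t) u)
                      ≤ (1 + (3:ℝ)^η * C1 + C2) * (t' ^ (-(1 + 2*η)/2) * gk (c*t') u
                        + t ^ (-(1 + 2*η)/2) * gk (c*t) u) := h2
                  _ = (1 + (3:ℝ)^η * C1 + C2) * (t' ^ (-(1 + 2*η)/2) * gk (c*t') u
                        + t ^ (-(1 + 2*η)/2) * gk (c*t) u) := rfl
            _ = (1 + (3:ℝ)^η * C1 + C2) * (t'-t)^η * (t' ^ (-(1 + 2*η)/2) * gk (c*t') u
                  + t ^ (-(1 + 2*η)/2) * gk (c*t) u) := by ring
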